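/- For any infinite compact Hausdorff space K, the space C_w(K) has property (B) and is not Fréchet–Urysohn. -/

import Mathlib

/-- A topological space `X` has property (B) if it can be covered by countably many closed
nowhere-dense sets `A n` such that every compact subset of `X` is contained in some `A n`. -/
def PropertyB (X : Type*) [TopologicalSpace X] : Prop :=
  ∃ A : ℕ → Set X,
    (∀ n, IsClosed (A n)) ∧ (∀ n, interior (A n) = ∅) ∧
    (⋃ n, A n) = Set.univ ∧
    ∀ C : Set X, IsCompact C → ∃ n, C ⊆ A n

/-- The weak topology on `C(K, ℝ)`: the coarsest topology making all continuous linear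
functionals on the Banach space `C(K)` continuous. -/
noncomputable def weakTopology (K : Type*) [TopologicalSpace K] [CompactSpace K] :
    TopologicalSpace C(K, ℝ) :=
  ⨅ μ : C(K, ℝ) →L[ℝ] ℝ, TopologicalSpace.induced μ inferInstance

open Filter Topology Set NormedSpace

section Aux

lemma mem_of_nhds' {X : Type*} [t : TopologicalSpace X] {s : Set X} {x : X}
    (h : s ∈ 𝓝 x) : x ∈ s := mem_of_mem_nhds h

lemma interior_empty_of_nhds {X : Type*} [t : TopologicalSpace X] {s : Set X}
    (h : ∀ f, s ∉ 𝓝 f) : interior s = ∅ := by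
  rw [Set.eq_empty_iff_forall_notMem]
  exact fun f hf => h f (mem_interior_iff_mem_nhds.mp hf)

lemma mem_closure_nhds' {X : Type*} [t : TopologicalSpace X] {s : Set X} {a : X}
    (h : ∀ u ∈ 𝓝 a, (u ∩ s).Nonempty) : a ∈ closure s := mem_closure_iff_nhds.mpr h

lemma fu_seq' {X : Type*} [t : TopologicalSpace X] [h : FrechetUrysohnSpace X] {s : Set X}
    {a : X} (ha : a ∈ closure s) :
    ∃ u : ℕ → X, (∀ n, u n ∈ s) ∧ Tendsto u atTop (𝓝 a) :=
  mem_closure_iff_seq_limit.mp ha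

lemma tendsto_map' {X Y : Type*} [tX : TopologicalSpace X] [tY : TopologicalSpace Y]
    {u : ℕ → X} {a : X} {g : X → Y} (hg : Continuous g) (h : Tendsto u atTop (𝓝 a)) :
    Tendsto (fun j => g (u j)) atTop (𝓝 (g a)) := (hg.tendsto a).comp h

lemma compact_image' {X Y : Type*} [tX : TopologicalSpace X] [tY : TopologicalSpace Y]
    {s : Set X} {f : X → Y} (hs : IsCompact s) (hf : Continuous f) : IsCompact (f '' s) :=
  hs.image hf

end Aux

section Main

variable {K : Type*} [TopologicalSpace K] [CompactSpace K]

lemma wt_cont (μ : C(K,ℝ) →L[ℝ] ℝ) : Continuous[weakTopology K, _] μ :=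
  continuous_iInf_dom (i := μ) continuous_induced_dom

lemma wt_nhds (f : C(K,ℝ)) :
    @nhds _ (weakTopology K) f = ⨅ μ : C(K,ℝ) →L[ℝ] ℝ, Filter.comap μ (𝓝 (μ f)) := by
  rw [weakTopology, _root_.nhds_iInf]
  exact iInf_congr fun μ => nhds_induced μ f


lemma cb_eq (n : ℝ) (hn : 0 ≤ n) :
    Metric.closedBall (0:C(K,ℝ)) n = ⋂ μ : C(K,ℝ) →L[ℝ] ℝ, μ ⁻¹' Iic (‖μ‖ * n) := by
  ext f
  simp only [Metric.mem_closedBall, dist_zero_right, Set.mem_iInter, Set.mem_preimage,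
    Set.mem_Iic]
  constructor
  · intro h μ
    calc μ f ≤ |μ f| := le_abs_self _
    _ ≤ ‖μ‖ * ‖f‖ := μ.le_opNorm f
    _ ≤ ‖μ‖ * n := by gcongr
  · intro h
    by_contra hf
    push_neg at hf
    have hf0 : f ≠ 0 := by
      intro h0; rw [h0, norm_zero] at hf; exact absurd hn (not_le.mpr hf)
    obtain ⟨g, hg1, hgf⟩ := exists_dual_vector ℝ f (norm_ne_zero_iff.mpr hf0)
    have := h g
    rw [hgf, hg1, one_mul] at this
    exact absurd this (not_le.mpr hf)

lemma cb_closed (n : ℝ) (hn : 0 ≤ n) :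
    @IsClosed _ (weakTopology K) (Metric.closedBall (0:C(K,ℝ)) n) := by
  rw [cb_eq n hn]
  exact @isClosed_iInter _ _ (weakTopology K) _ fun μ =>
    @IsClosed.preimage _ _ (weakTopology K) _ μ (wt_cont μ) _ isClosed_Iic


lemma wt_compact_bounded {C : Set C(K,ℝ)} (hC : @IsCompact _ (weakTopology K) C) :
    ∃ n : ℕ, C ⊆ Metric.closedBall 0 n := by
  have hb : ∀ μ : StrongDual ℝ C(K,ℝ), ∃ M, ∀ x : C,
      ‖(inclusionInDoubleDual ℝ C(K,ℝ) (x : C(K,ℝ))) μ‖ ≤ M := by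
    intro μ
    have hcomp : IsCompact (μ '' C) :=
      @compact_image' _ _ (weakTopology K) _ _ _ hC (wt_cont μ)
    obtain ⟨M, hM⟩ := hcomp.isBounded.subset_closedBall 0
    refine ⟨M, fun x => ?_⟩
    have := hM ⟨(x : C(K,ℝ)), x.2, rfl⟩
    simpa [dist_zero_right, dual_def] using this
  obtain ⟨M, hM⟩ := banach_steinhaus hb
  obtain ⟨n, hn⟩ := exists_nat_ge M
  refine ⟨n, fun x hx => ?_⟩
  have h1 : ‖x‖ ≤ M := by
    have h2 := hM ⟨x, hx⟩
    have h3 : ‖inclusionInDoubleDual ℝ C(K,ℝ) x‖ = ‖x‖ :=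
      (inclusionInDoubleDualLi ℝ (E := C(K,ℝ))).norm_map x
    rw [← h3]; exact h2
  simp only [Metric.mem_closedBall, dist_zero_right]
  linarith


variable [T2Space K] [Infinite K]


lemma exists_biorth (m : ℕ) : ∃ g : Fin m → C(K,ℝ), ∃ e : Fin m → K,
    ∀ i j, g i (e j) = if i = j then 1 else 0 := by
  classical
  set e : Fin m → K := fun i => Infinite.natEmbedding K i with he
  have hinj : Function.Injective e := fun i j h => by
    have := (Infinite.natEmbedding K).injective h
    exact Fin.ext (by exact_mod_cast this)
  have H : ∀ i : Fin m, ∃ g : C(K,ℝ), (∀ j, j ≠ i → g (e j) = 0) ∧ g (e i) = 1 := by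
    intro i
    have hs : IsClosed (e '' {j | j ≠ i}) := (Set.toFinite _).image e |>.isClosed
    have ht : IsClosed ({e i} : Set K) := isClosed_singleton
    have hd : Disjoint (e '' {j | j ≠ i}) {e i} := by
      simp only [Set.disjoint_singleton_right, Set.mem_image]
      rintro ⟨j, hj, hji⟩
      exact hj (hinj hji)
    obtain ⟨f, hf0, hf1, -⟩ := exists_continuous_zero_one_of_isClosed hs ht hd
    exact ⟨f, fun j hj => hf0 ⟨j, hj, rfl⟩, hf1 rfl⟩
  choose g hg0 hg1 using H
  refine ⟨g, e, fun i j => ?_⟩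
  by_cases h : i = j
  · subst h; simp [hg1]
  · simp [h, hg0 i j (fun hji => h (hji ▸ rfl))]

lemma exists_ker {ι : Type*} [Fintype ι] (μ : ι → C(K,ℝ) →L[ℝ] ℝ) :
    ∃ g : C(K,ℝ), g ≠ 0 ∧ ∀ i, μ i g = 0 := by
  classical
  by_contra hc
  push_neg at hc
  have hinj : Function.Injective (LinearMap.pi (fun i => (μ i : C(K,ℝ) →ₗ[ℝ] ℝ))) := by
    rw [← LinearMap.ker_eq_bot, LinearMap.ker_eq_bot']
    intro f hf
    by_contra hf0
    exact absurd (funext_iff.mp hf) (by simpa using hc f hf0)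
  have : FiniteDimensional ℝ C(K,ℝ) :=
    FiniteDimensional.of_injective (LinearMap.pi (fun i => (μ i : C(K,ℝ) →ₗ[ℝ] ℝ))) hinj
  set d := Module.finrank ℝ C(K,ℝ)
  obtain ⟨g, e, hge⟩ := exists_biorth (K := K) (d+1)
  have hli : LinearIndependent ℝ g := by
    rw [Fintype.linearIndependent_iff]
    intro c hc0 i
    have := congrArg (fun f : C(K,ℝ) => f (e i)) hc0
    simpa [ContinuousMap.coe_sum, Finset.sum_apply, hge] using this
  have := hli.fintype_card_le_finrank
  simp [d] at this


lemma cb_interior (n : ℝ) :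
    @interior _ (weakTopology K) (Metric.closedBall (0:C(K,ℝ)) n) = ∅ := by
  classical
  refine @interior_empty_of_nhds _ (weakTopology K) _ fun f hmem => ?_
  have hfcb := @mem_of_nhds' _ (weakTopology K) _ _ hmem
  have hn : 0 ≤ n := le_trans (norm_nonneg f) (by simpa [dist_zero_right] using hfcb)
  rw [wt_nhds] at hmem
  obtain ⟨I, hIfin, V, hV, hUeq⟩ := Filter.mem_iInf.mp hmem
  haveI := hIfin.fintype
  obtain ⟨g, hg0, hgker⟩ := exists_ker (fun i : I => (i : C(K,ℝ) →L[ℝ] ℝ))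
  have hgnorm : 0 < ‖g‖ := norm_pos_iff.mpr hg0
  set t : ℝ := (n + ‖f‖ + 1) / ‖g‖ with ht
  have htnn : 0 ≤ t := div_nonneg (by positivity) hgnorm.le
  have hmem2 : f + t • g ∈ Metric.closedBall (0:C(K,ℝ)) n := by
    rw [hUeq]
    refine Set.mem_iInter.mpr fun i => ?_
    obtain ⟨W, hW, hWsub⟩ := Filter.mem_comap.mp (hV i)
    apply hWsub
    have hval : (i : C(K,ℝ) →L[ℝ] ℝ) (f + t • g) = (i : C(K,ℝ) →L[ℝ] ℝ) f := by
      simp [map_add, map_smul, hgker i]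
    simpa [Set.mem_preimage, hval] using mem_of_mem_nhds hW
  have hle : ‖f + t • g‖ ≤ n := by
    simpa [dist_zero_right] using hmem2
  have hsm : ‖t • g‖ = n + ‖f‖ + 1 := by
    have := norm_smul t g
    rw [this, Real.norm_eq_abs, abs_of_nonneg htnn, ht, div_mul_cancel₀ _ hgnorm.ne']
  have htri : ‖t • g‖ ≤ ‖f + t • g‖ + ‖f‖ := by
    calc ‖t • g‖ = ‖(f + t • g) - f‖ := by rw [add_sub_cancel_left]
    _ ≤ ‖f + t • g‖ + ‖f‖ := norm_sub_le _ _
  rw [hsm] at htri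
  have hfn : 0 ≤ ‖f‖ := norm_nonneg f
  linarith


lemma exists_disjoint_opens :
    ∃ (t : ℕ → K) (U : ℕ → Set K), (∀ n, IsOpen (U n)) ∧ (∀ n, t n ∈ U n) ∧
      Pairwise (Function.onFun Disjoint U) := by
  classical
  obtain ⟨z, hz⟩ : ∃ z : K, ∀ V : Set K, IsOpen V → z ∈ V → V.Infinite := by
    by_contra h
    push_neg at h
    choose V hVo hVz hVfin using h
    obtain ⟨s, hs⟩ := IsCompact.elim_finite_subcover isCompact_univ V hVo
      (fun x _ => mem_iUnion.mpr ⟨x, hVz x⟩)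
    have hfin : (univ : Set K).Finite :=
      ((s.finite_toSet.biUnion (fun i _ => (hVfin i)))).subset hs
    exact Set.infinite_univ hfin
  have step : ∀ V : Set K, IsOpen V → z ∈ V →
      ∃ (t : K) (U W : Set K), (IsOpen U ∧ t ∈ U ∧ U ⊆ V) ∧
        (IsOpen W ∧ z ∈ W ∧ W ⊆ V) ∧ Disjoint U W := by
    intro V hVo hVz
    obtain ⟨y, hyV, hyz⟩ : ∃ y ∈ V, y ≠ z := by
      obtain ⟨y, hy⟩ := ((hz V hVo hVz).diff (Set.finite_singleton z)).nonempty
      exact ⟨y, hy.1, by simpa using hy.2⟩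
    obtain ⟨B, A, hBo, hAo, hyB, hzA, hBA⟩ := t2_separation hyz
    exact ⟨y, B ∩ V, A ∩ V, ⟨hBo.inter hVo, ⟨hyB, hyV⟩, inter_subset_right⟩,
      ⟨hAo.inter hVo, ⟨hzA, hVz⟩, inter_subset_right⟩,
      hBA.mono inter_subset_left inter_subset_left⟩
  choose t' U' W' hU hW hD using step
  let F : ℕ → {V : Set K // IsOpen V ∧ z ∈ V} := fun n =>
    Nat.rec ⟨univ, isOpen_univ, mem_univ z⟩
      (fun _ p => ⟨W' p.1 p.2.1 p.2.2, (hW p.1 p.2.1 p.2.2).1, (hW p.1 p.2.1 p.2.2).2.1⟩) n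
  set t : ℕ → K := fun n => t' (F n).1 (F n).2.1 (F n).2.2 with ht
  set U : ℕ → Set K := fun n => U' (F n).1 (F n).2.1 (F n).2.2 with hU2
  have hFsucc : ∀ n, (F (n+1)).1 = W' (F n).1 (F n).2.1 (F n).2.2 := fun n => rfl
  have hchain : ∀ n m, n ≤ m → (F m).1 ⊆ (F n).1 := by
    intro n m hnm
    induction m with
    | zero => simp_all
    | succ m ih =>
      rcases Nat.lt_or_ge n (m+1) with h | h
      · have h1 : (F (m+1)).1 ⊆ (F m).1 := by
          rw [hFsucc m]; exact (hW (F m).1 (F m).2.1 (F m).2.2).2.2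
        exact h1.trans (ih (Nat.lt_succ_iff.mp h))
      · have : n = m + 1 := le_antisymm hnm h
        subst this; exact subset_rfl
  have hdisj : ∀ n m, n < m → Disjoint (U n) (U m) := by
    intro n m hnm
    have h1 : (U m) ⊆ (F (n+1)).1 := by
      refine subset_trans ?_ (hchain (n+1) m hnm)
      exact (hU (F m).1 (F m).2.1 (F m).2.2).2.2
    have h2 : Disjoint (U n) ((F (n+1)).1) := by
      rw [hFsucc n]; exact hD (F n).1 (F n).2.1 (F n).2.2
    exact h2.mono_right h1
  refine ⟨t, U, fun n => (hU (F n).1 (F n).2.1 (F n).2.2).1,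
    fun n => (hU (F n).1 (F n).2.1 (F n).2.2).2.1, fun n m hnm => ?_⟩
  rcases Nat.lt_or_ge n m with h | h
  · exact hdisj n m h
  · exact (hdisj m n (lt_of_le_of_ne h (Ne.symm hnm))).symm


lemma exists_bump_family :
    ∃ (t : ℕ → K) (f : ℕ → C(K,ℝ)),
      (∀ n x, f n x ∈ Icc (0:ℝ) 1) ∧
      (∀ i j, f i (t j) = if i = j then 1 else 0) ∧
      (∀ μ : C(K,ℝ) →L[ℝ] ℝ, Tendsto (fun n => μ (f n)) atTop (𝓝 0)) := by
  classical
  obtain ⟨t, U, hUo, htU, hdisj⟩ := exists_disjoint_opens (K := K)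
  have H : ∀ n : ℕ, ∃ f : C(K,ℝ), (∀ x ∉ U n, f x = 0) ∧ f (t n) = 1 ∧
      ∀ x, f x ∈ Icc (0:ℝ) 1 := by
    intro n
    obtain ⟨f, hf0, hf1, hf01⟩ := exists_continuous_zero_one_of_isClosed
      (isClosed_compl_iff.mpr (hUo n)) isClosed_singleton
      (disjoint_singleton_right.mpr (fun hx => hx (htU n)))
    exact ⟨f, fun x hx => hf0 hx, hf1 rfl, hf01⟩
  choose f hfz hft hf01 using H
  have hsupp : ∀ i j, i ≠ j → f i (t j) = 0 := by
    intro i j hij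
    exact hfz i (t j) (fun h => (hdisj hij).le_bot ⟨h, htU j⟩)
  refine ⟨t, f, fun n x => hf01 n x, ?_, ?_⟩
  · intro i j
    by_cases h : i = j
    · subst h; simp [hft]
    · simp [h, hsupp i j h]
  · intro μ
    -- partial sums of |μ (f n)| are bounded by ‖μ‖
    have key : ∀ F : Finset ℕ, ∑ n ∈ F, |μ (f n)| ≤ ‖μ‖ := by
      intro F
      set c : ℕ → ℝ := fun n => if μ (f n) < 0 then -1 else 1 with hc
      set g : C(K,ℝ) := ∑ n ∈ F, c n • f n with hg
      have hgnorm : ‖g‖ ≤ 1 := by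
        refine (ContinuousMap.norm_le _ zero_le_one).mpr fun x => ?_
        have hgx : g x = ∑ n ∈ F, c n * f n x := by
          simp [hg, ContinuousMap.coe_sum, Finset.sum_apply]
        rw [Real.norm_eq_abs, hgx]
        by_cases hx : ∃ n ∈ F, x ∈ U n
        · obtain ⟨n0, hn0F, hn0⟩ := hx
          rw [Finset.sum_eq_single_of_mem n0 hn0F]
          · have h1 := (hf01 n0 x).1
            have h2 := (hf01 n0 x).2
            rcases (by by_cases h : μ (f n0) < 0 <;> simp [hc, h] : c n0 = -1 ∨ c n0 = 1)
              with h | h <;> rw [h] <;> rw [abs_le] <;> constructor <;> nlinarith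
          · intro b _ hb
            have : f b x = 0 := hfz b x (fun hxb => (hdisj hb).le_bot ⟨hxb, hn0⟩)
            simp [this]
        · push_neg at hx
          have : ∀ n ∈ F, c n * f n x = 0 := fun n hn => by
            simp [hfz n x (hx n hn)]
          rw [Finset.sum_eq_zero this]
          simp
      have hμg : μ g = ∑ n ∈ F, |μ (f n)| := by
        rw [hg, map_sum]
        refine Finset.sum_congr rfl fun n _ => ?_
        rw [map_smul, smul_eq_mul]
        by_cases h : μ (f n) < 0
        · simp [hc, h, abs_of_neg h]
        · simp [hc, h, abs_of_nonneg (not_lt.mp h)]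
      calc ∑ n ∈ F, |μ (f n)| = μ g := hμg.symm
      _ ≤ |μ g| := le_abs_self _
      _ ≤ ‖μ‖ * ‖g‖ := μ.le_opNorm g
      _ ≤ ‖μ‖ := by nlinarith [norm_nonneg μ]
    have hsum : Summable (fun n => |μ (f n)|) :=
      summable_of_sum_range_le (fun n => abs_nonneg _) (fun n => key (Finset.range n))
    have hs2 : Summable (fun n => μ (f n)) := hsum.of_abs
    exact hs2.tendsto_atTop_zero


lemma not_fu : ¬ @FrechetUrysohnSpace C(K,ℝ) (weakTopology K) := by
  intro hFU
  classical
  obtain ⟨t, f, hf01, hft, hnull⟩ := exists_bump_family (K := K)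
  set A : Set C(K,ℝ) := {h | ∃ n m : ℕ, n < m ∧ h = f n + ((n:ℝ)+1) • f m} with hA
  have hcl : (0 : C(K,ℝ)) ∈ @closure _ (weakTopology K) A := by
    refine @mem_closure_nhds' _ (weakTopology K) _ _ fun u hu => ?_
    rw [wt_nhds] at hu
    obtain ⟨I, hIfin, V, hV, hueq⟩ := Filter.mem_iInf.mp hu
    haveI := hIfin.fintype
    have hV0 : ∀ i : I, V i ∈ Filter.comap (i : C(K,ℝ) →L[ℝ] ℝ) (𝓝 0) := by
      intro i; simpa using hV i
    choose W hW hWsub using fun i => Filter.mem_comap.mp (hV0 i)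
    choose ε hεpos hball using fun i => Metric.mem_nhds_iff.mp (hW i)
    have E1 : ∀ᶠ n in atTop, ∀ i : I, ‖(i : C(K,ℝ) →L[ℝ] ℝ) (f n)‖ < ε i / 2 :=
      eventually_all.mpr fun (i : I) =>
        NormedAddCommGroup.tendsto_nhds_zero.mp (hnull i) _ (half_pos (hεpos i))
    obtain ⟨n, hn⟩ := E1.exists
    have E2 : ∀ᶠ m in atTop, (∀ i : I,
        ‖(i : C(K,ℝ) →L[ℝ] ℝ) (f m)‖ < ε i / (2 * ((n:ℝ)+1))) ∧ n < m :=
      (eventually_all.mpr fun (i : I) =>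
        NormedAddCommGroup.tendsto_nhds_zero.mp (hnull i) _
          (div_pos (hεpos i) (by positivity))).and (eventually_gt_atTop n)
    obtain ⟨m, hm, hnm⟩ := E2.exists
    refine ⟨f n + ((n:ℝ)+1) • f m, ?_, ⟨n, m, hnm, rfl⟩⟩
    rw [hueq]
    refine Set.mem_iInter.mpr fun i => ?_
    apply hWsub i
    apply hball i
    rw [Metric.mem_ball, dist_zero_right, map_add, map_smul, smul_eq_mul]
    have h1 := hn i
    have h2 := hm i
    rw [Real.norm_eq_abs] at h1 h2 ⊢
    have hpos : (0:ℝ) < (n:ℝ) + 1 := by positivity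
    calc |(i : C(K,ℝ) →L[ℝ] ℝ) (f n) + ((n:ℝ)+1) * (i : C(K,ℝ) →L[ℝ] ℝ) (f m)|
        ≤ |(i : C(K,ℝ) →L[ℝ] ℝ) (f n)| + ((n:ℝ)+1) * |(i : C(K,ℝ) →L[ℝ] ℝ) (f m)| := by
          calc |(i : C(K,ℝ) →L[ℝ] ℝ) (f n) + ((n:ℝ)+1) * (i : C(K,ℝ) →L[ℝ] ℝ) (f m)|
              ≤ |(i : C(K,ℝ) →L[ℝ] ℝ) (f n)| + |((n:ℝ)+1) * (i : C(K,ℝ) →L[ℝ] ℝ) (f m)| :=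
                abs_add_le _ _
            _ = |(i : C(K,ℝ) →L[ℝ] ℝ) (f n)| + ((n:ℝ)+1) * |(i : C(K,ℝ) →L[ℝ] ℝ) (f m)| := by
                rw [abs_mul, abs_of_pos hpos]
      _ < ε i / 2 + ((n:ℝ)+1) * (ε i / (2 * ((n:ℝ)+1))) := by
          have := mul_lt_mul_of_pos_left h2 hpos
          linarith
      _ = ε i := by field_simp; ring
  obtain ⟨u, huA, hut⟩ := @fu_seq' _ (weakTopology K) hFU _ _ hcl
  choose nj mj hlt hueq using fun j => huA j
  have htend : ∀ μ : C(K,ℝ) →L[ℝ] ℝ, Tendsto (fun j => μ (u j)) atTop (𝓝 0) := by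
    intro μ
    have := @tendsto_map' _ _ (weakTopology K) _ u 0 μ (wt_cont μ) hut
    simpa using this
  have hval : ∀ j k, u j (t k) =
      (if nj j = k then (1:ℝ) else 0) + ((nj j:ℝ)+1) * (if mj j = k then 1 else 0) := by
    intro j k
    rw [hueq j]
    simp [hft]
  have heval : ∀ k, Tendsto (fun j => u j (t k)) atTop (𝓝 0) := by
    intro k
    have := htend (ContinuousMap.evalCLM ℝ (t k))
    simpa [ContinuousMap.evalCLM] using this
  have hne : ∀ k, ∀ᶠ j in atTop, nj j ≠ k ∧ mj j ≠ k := by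
    intro k
    have h1 : ∀ᶠ j in atTop, ‖u j (t k)‖ < 1 :=
      NormedAddCommGroup.tendsto_nhds_zero.mp (heval k) 1 one_pos
    refine h1.mono fun j hj => ?_
    rw [Real.norm_eq_abs, hval j k] at hj
    constructor
    · intro h
      rw [if_pos h] at hj
      have : (0:ℝ) ≤ ((nj j:ℝ)+1) * (if mj j = k then 1 else 0) := by positivity
      have habs := le_abs_self ((1:ℝ) + ((nj j:ℝ)+1) * (if mj j = k then 1 else 0))
      linarith
    · intro h
      rw [if_pos h] at hj
      have h0 : (0:ℝ) ≤ (if nj j = k then (1:ℝ) else 0) := by positivity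
      have hn1 : (1:ℝ) ≤ ((nj j:ℝ)+1) * 1 := by
        have : (0:ℝ) ≤ (nj j : ℝ) := Nat.cast_nonneg _
        linarith
      have habs := le_abs_self ((if nj j = k then (1:ℝ) else 0) + ((nj j:ℝ)+1) * 1)
      linarith
  have hnj_top : Tendsto nj atTop atTop := by
    rw [tendsto_atTop]
    intro b
    have : ∀ᶠ j in atTop, ∀ k ∈ Finset.range b, nj j ≠ k :=
      eventually_all_finset _ |>.mpr fun k _ => (hne k).mono fun j hj => hj.1
    refine this.mono fun j hj => ?_
    by_contra hb
    exact hj (nj j) (Finset.mem_range.mpr (not_le.mp hb)) rfl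
  -- extraction
  have hstep : ∀ (c N : ℕ), ∃ j, c < j ∧ N ≤ nj j :=
    fun c N => ((eventually_gt_atTop c).and (hnj_top.eventually_ge_atTop N)).exists
  choose J hJ1 hJ2 using hstep
  set φ : ℕ → ℕ := fun i => Nat.rec 0 (fun i prev => J prev (2^(i+1))) i with hφ
  have hφs : ∀ i, φ (i+1) = J (φ i) (2^(i+1)) := fun i => rfl
  have hφmono : StrictMono φ := strictMono_nat_of_lt_succ fun i => by
    rw [hφs]; exact hJ1 _ _
  have hφn : ∀ i, 2^i ≤ nj (φ i) + 1 := by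
    intro i
    cases i with
    | zero => simp
    | succ i => rw [hφs]; exact le_trans (hJ2 _ _) (Nat.le_succ _)
  set w : ℕ → ℝ := fun i => 1/((nj (φ i) : ℝ)+1) with hw
  have hwpos : ∀ i, 0 < w i := fun i => by positivity
  have hwle : ∀ i, w i ≤ (1/2)^i := by
    intro i
    have h2 : (2:ℝ)^i ≤ (nj (φ i) : ℝ) + 1 := by
      exact_mod_cast hφn i
    have hlhs : w i = (((nj (φ i)):ℝ)+1)⁻¹ := one_div _
    have hrhs : ((1:ℝ)/2)^i = ((2:ℝ)^i)⁻¹ := by rw [one_div, inv_pow]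
    rw [hlhs, hrhs]
    exact inv_anti₀ (by positivity) h2
  -- the functional
  have hgeo : Summable (fun i => ((1:ℝ)/2)^i) :=
    summable_geometric_of_lt_one (by norm_num) (by norm_num)
  have hterm : ∀ (g : C(K,ℝ)) (i : ℕ), ‖w i * g (t (mj (φ i)))‖ ≤ (1/2)^i * ‖g‖ := by
    intro g i
    rw [norm_mul]
    gcongr
    · rw [Real.norm_eq_abs, abs_of_pos (hwpos i)]; exact hwle i
    · exact ContinuousMap.norm_coe_le_norm g _
  have hS : ∀ g : C(K,ℝ), Summable (fun i => w i * g (t (mj (φ i)))) := fun g =>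
    Summable.of_norm_bounded (hgeo.mul_right _) (hterm g)
  have hSnorm : ∀ g : C(K,ℝ), Summable (fun i => ‖w i * g (t (mj (φ i)))‖) := fun g =>
    Summable.of_nonneg_of_le (fun i => norm_nonneg _) (hterm g) (hgeo.mul_right _)
  set μlin : C(K,ℝ) →ₗ[ℝ] ℝ :=
    { toFun := fun g => ∑' i, w i * g (t (mj (φ i)))
      map_add' := by
        intro g h
        simp only [ContinuousMap.add_apply, mul_add]
        exact Summable.tsum_add (hS g) (hS h)
      map_smul' := by
        intro c g
        simp only [ContinuousMap.smul_apply, smul_eq_mul, RingHom.id_apply]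
        rw [← tsum_mul_left]
        congr 1
        funext i
        ring } with hμlin
  have hbound : ∀ g : C(K,ℝ), ‖μlin g‖ ≤ 2 * ‖g‖ := by
    intro g
    have h1 : ‖μlin g‖ ≤ ∑' i, ‖w i * g (t (mj (φ i)))‖ :=
      norm_tsum_le_tsum_norm (hSnorm g)
    have h2 : ∑' i, ‖w i * g (t (mj (φ i)))‖ ≤ ∑' i, ((1:ℝ)/2)^i * ‖g‖ :=
      Summable.tsum_le_tsum (hterm g) (hSnorm g) (hgeo.mul_right _)
    have h3 : ∑' i, ((1:ℝ)/2)^i * ‖g‖ = 2 * ‖g‖ := by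
      rw [tsum_mul_right, tsum_geometric_two]
    linarith
  have hfinal : ∀ i0, (1:ℝ) ≤ μlin.mkContinuous 2 hbound (u (φ i0)) := by
    intro i0
    have happ : μlin.mkContinuous 2 hbound (u (φ i0))
        = ∑' i, w i * (u (φ i0)) (t (mj (φ i))) := rfl
    rw [happ]
    have hnonneg : ∀ i, 0 ≤ w i * (u (φ i0)) (t (mj (φ i))) := by
      intro i
      apply mul_nonneg (hwpos i).le
      rw [hval]
      split_ifs <;> positivity
    have hterm0 : w i0 * (u (φ i0)) (t (mj (φ i0))) = 1 := by
      rw [hval]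
      have hne' : nj (φ i0) ≠ mj (φ i0) := Nat.ne_of_lt (hlt (φ i0))
      rw [if_neg hne', if_pos rfl]
      simp only [hw]
      have : ((nj (φ i0)):ℝ) + 1 ≠ 0 := by positivity
      field_simp
      ring
    calc (1:ℝ) = w i0 * (u (φ i0)) (t (mj (φ i0))) := hterm0.symm
    _ ≤ ∑' i, w i * (u (φ i0)) (t (mj (φ i))) := Summable.le_tsum (hS _) i0 (fun j _ => hnonneg j)
  have htend2 : Tendsto (fun i0 => μlin.mkContinuous 2 hbound (u (φ i0))) atTop (𝓝 0) :=
    (htend _).comp (hφmono.tendsto_atTop)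
  obtain ⟨i0, hi0⟩ := (NormedAddCommGroup.tendsto_nhds_zero.mp htend2 1 one_pos).exists
  have hge := hfinal i0
  rw [Real.norm_eq_abs] at hi0
  have habs := le_abs_self (μlin.mkContinuous 2 hbound (u (φ i0)))
  linarith


end Main

/-- For any infinite compact Hausdorff space `K`, the space `C_w(K)` has property (B)
and is not Fréchet–Urysohn. -/
theorem statement8 (K : Type*) [TopologicalSpace K] [CompactSpace K] [T2Space K] [Infinite K] :
    @PropertyB C(K, ℝ) (weakTopology K) ∧
      ¬ @FrechetUrysohnSpace C(K, ℝ) (weakTopology K) := by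
  constructor
  · refine ⟨fun n => Metric.closedBall 0 n,
      fun n => cb_closed n (Nat.cast_nonneg n),
      fun n => cb_interior n, ?_, fun C hC => wt_compact_bounded hC⟩
    rw [Set.eq_univ_iff_forall]
    intro f
    obtain ⟨n, hn⟩ := exists_nat_ge ‖f‖
    exact Set.mem_iUnion.mpr ⟨n, by simpa [dist_zero_right] using hn⟩
  · exact not_fu
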